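/- Let (P,≤) be a poset and A, C disjoint subsets of P such that A is a downset, C is an upset, and every element of A is strictly below every element of C. Let B = P \ (A ∪ C). Define a relation ⪯ on P by: x ⪯ y iff (x,y are both in A, both in B, or both in C, and x ≤ y), or (x ∈ B, y ∈ A, and x,y are incomparable in ≤), or (x ∈ C and y ∈ A), or (x ∈ C, y ∈ B, and x,y are incomparable in ≤). Then ⪯ is a partial order on P. -/

import Mathlib

universe u

variable {P : Type u}

/-- `A` is a downset (downward closed set) w.r.t. the relation `le`. -/
def IsDownset (le : P → P → Prop) (A : Set P) : Prop :=
  ∀ ⦃x⦄, x ∈ A → ∀ ⦃y⦄, le y x → y ∈ A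

/-- `C` is an upset (upward closed set) w.r.t. the relation `le`. -/
def IsUpset (le : P → P → Prop) (C : Set P) : Prop :=
  ∀ ⦃x⦄, x ∈ C → ∀ ⦃y⦄, le x y → y ∈ C

/-- `x` and `y` are incomparable w.r.t. `le`. -/
def Incomp (le : P → P → Prop) (x y : P) : Prop := ¬ le x y ∧ ¬ le y x

/-- Strictly less: `le x y` and `x ≠ y`. -/
def SLT (le : P → P → Prop) (x y : P) : Prop := le x y ∧ x ≠ y

/-- The conditions under which the rotation `R_{A,C}` is defined:
`A`, `C` disjoint, `A` a downset, `C` an upset, and every element of `A`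
strictly below every element of `C`. -/
def RotOK (le : P → P → Prop) (A C : Set P) : Prop :=
  Disjoint A C ∧ IsDownset le A ∧ IsUpset le C ∧
    ∀ a ∈ A, ∀ c ∈ C, le a c ∧ a ≠ c

/-- The rotation `R_{A,C}` of the relation `le`; the middle block `B` is the
complement of `A ∪ C`. -/
def Rot (le : P → P → Prop) (A C : Set P) : P → P → Prop := fun x y =>
  (((x ∈ A ∧ y ∈ A) ∨ (x ∉ A ∧ x ∉ C ∧ y ∉ A ∧ y ∉ C) ∨ (x ∈ C ∧ y ∈ C)) ∧ le x y) ∨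
  (x ∉ A ∧ x ∉ C ∧ y ∈ A ∧ Incomp le x y) ∨
  (x ∈ C ∧ y ∈ A) ∨
  (x ∈ C ∧ y ∉ A ∧ y ∉ C ∧ Incomp le x y)

/-- One rotation step between two relations on the same domain. -/
def RotStep (le le' : P → P → Prop) : Prop :=
  ∃ A C, RotOK le A C ∧ le' = Rot le A C

/-- Rotation-equivalence: the reflexive-transitive closure of rotation steps. -/
def RotEquiv (le le' : P → P → Prop) : Prop :=
  Relation.ReflTransGen RotStep le le'

/-- Restriction of a relation to a subset (as a relation on the subtype). -/
def restrictRel (le : P → P → Prop) (S : Set P) : S → S → Prop :=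
  fun x y => le x.1 y.1

/-- The set of maximal elements of a relation. -/
def maxSet (le : P → P → Prop) : Set P := {x | ∀ y, le x y → y = x}

/-- The rotation class `O₂` of a three element poset `{a,b,c}`:
chains `a<b<c`, `b<c<a`, `c<a<b`, and the posets with single comparability
`a<b`, `b<c`, `c<a`. -/
def O2rel (le : P → P → Prop) (a b c : P) : Prop :=
  (SLT le a b ∧ SLT le b c) ∨ (SLT le b c ∧ SLT le c a) ∨ (SLT le c a ∧ SLT le a b) ∨
  (SLT le a b ∧ Incomp le a c ∧ Incomp le b c) ∨
  (SLT le b c ∧ Incomp le b a ∧ Incomp le c a) ∨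
  (SLT le c a ∧ Incomp le c b ∧ Incomp le a b)

/-- The rotation class `O₃`: the dual of `O₂`. -/
def O3rel (le : P → P → Prop) (a b c : P) : Prop := O2rel le c b a

/-- The rotation class `O₁`: the antichain together with the `V` and `Λ` shaped
three element posets. -/
def O1rel (le : P → P → Prop) (a b c : P) : Prop :=
  (Incomp le a b ∧ Incomp le b c ∧ Incomp le a c) ∨
  (SLT le a b ∧ SLT le a c ∧ Incomp le b c) ∨
  (SLT le b a ∧ SLT le b c ∧ Incomp le a c) ∨
  (SLT le c a ∧ SLT le c b ∧ Incomp le a b) ∨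
  (SLT le b a ∧ SLT le c a ∧ Incomp le b c) ∨
  (SLT le a b ∧ SLT le c b ∧ Incomp le a c) ∨
  (SLT le a c ∧ SLT le b c ∧ Incomp le a b)

/-- The extension property (EXT) characterizing the random poset: every
one-point extension of a finite subposet is realized by some element. -/
def ExtProp (le : P → P → Prop) : Prop :=
  ∀ Q : Set P, Q.Finite → ∀ D U : Set P, D ⊆ Q → U ⊆ Q → Disjoint D U →
    (∀ x ∈ Q, ∀ d ∈ D, le x d → x ∈ D) →
    (∀ x ∈ Q, ∀ u ∈ U, le u x → x ∈ U) →
    (∀ d ∈ D, ∀ u ∈ U, le d u ∧ d ≠ u) →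
    ∃ s, s ∉ Q ∧ (∀ d ∈ D, le d s ∧ d ≠ s) ∧ (∀ u ∈ U, le s u ∧ s ≠ u) ∧
      ∀ x ∈ Q, x ∉ D → x ∉ U → Incomp le s x


theorem stmt0 (le : P → P → Prop) [IsPartialOrder P le]
    (A C B : Set P) (hd : Disjoint A C) (hB : B = (A ∪ C)ᶜ)
    (hA : IsDownset le A) (hC : IsUpset le C)
    (hAC : ∀ a ∈ A, ∀ c ∈ C, le a c ∧ a ≠ c) :
    IsPartialOrder P (Rot le A C) := by
  have hrefl : ∀ x, le x x := fun x => refl_of le x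
  have htrans : ∀ {x y z}, le x y → le y z → le x z :=
    fun h1 h2 => IsTrans.trans _ _ _ h1 h2
  have hanti : ∀ {x y}, le x y → le y x → x = y :=
    fun h1 h2 => antisymm_of le h1 h2
  have hdj : ∀ {x}, x ∈ A → x ∈ C → False :=
    fun hx hy => Set.disjoint_left.mp hd hx hy
  refine { refl := ?_, trans := ?_, antisymm := ?_ }
  · intro x
    by_cases hxA : x ∈ A
    · exact Or.inl ⟨Or.inl ⟨hxA, hxA⟩, hrefl x⟩
    · by_cases hxC : x ∈ C
      · exact Or.inl ⟨Or.inr (Or.inr ⟨hxC, hxC⟩), hrefl x⟩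
      · exact Or.inl ⟨Or.inr (Or.inl ⟨hxA, hxC, hxA, hxC⟩), hrefl x⟩
  · intro x y z hxy hyz
    rcases hxy with ⟨hb1, hle1⟩ | ⟨hxA, hxC, hyA, hi1⟩ | ⟨hxC, hyA⟩ | ⟨hxC, hyA, hyC, hi1⟩
    · -- x,y in same block, le x y
      rcases hb1 with ⟨hxA, hyA⟩ | ⟨hxA, hxC, hyA, hyC⟩ | ⟨hxC, hyC⟩
      · -- x,y ∈ A : y can only go within A
        rcases hyz with ⟨hb2, hle2⟩ | ⟨hyA', _, _, _⟩ | ⟨hyC, _⟩ | ⟨hyC, _, _, _⟩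
        · rcases hb2 with ⟨_, hzA⟩ | ⟨hyA', _, _, _⟩ | ⟨hyC, _⟩
          · exact Or.inl ⟨Or.inl ⟨hxA, hzA⟩, htrans hle1 hle2⟩
          · exact absurd hyA hyA'
          · exact absurd (hdj hyA hyC) id
        · exact absurd hyA hyA'
        · exact absurd (hdj hyA hyC) id
        · exact absurd (hdj hyA hyC) id
      · -- x,y ∈ B
        rcases hyz with ⟨hb2, hle2⟩ | ⟨_, _, hzA, hi2⟩ | ⟨hyC', _⟩ | ⟨hyC', _, _, _⟩
        · rcases hb2 with ⟨hyA', _⟩ | ⟨_, _, hzA, hzC⟩ | ⟨hyC', _⟩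
          · exact absurd hyA' hyA
          · exact Or.inl ⟨Or.inr (Or.inl ⟨hxA, hxC, hzA, hzC⟩), htrans hle1 hle2⟩
          · exact absurd hyC' hyC
        · -- y B, z A, incomp y z
          refine Or.inr (Or.inl ⟨hxA, hxC, hzA, ?_, ?_⟩)
          · exact fun h => hxA (hA hzA h)
          · exact fun h => hi2.2 (htrans h hle1)
        · exact absurd hyC' hyC
        · exact absurd hyC' hyC
      · -- x,y ∈ C
        rcases hyz with ⟨hb2, hle2⟩ | ⟨_, hyC', _, _⟩ | ⟨_, hzA⟩ | ⟨_, hzA, hzC, hi2⟩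
        · rcases hb2 with ⟨hyA', _⟩ | ⟨_, hyC', _, _⟩ | ⟨_, hzC⟩
          · exact absurd (hdj hyA' hyC) id
          · exact absurd hyC hyC'
          · exact Or.inl ⟨Or.inr (Or.inr ⟨hxC, hzC⟩), htrans hle1 hle2⟩
        · exact absurd hyC hyC'
        · exact Or.inr (Or.inr (Or.inl ⟨hxC, hzA⟩))
        · refine Or.inr (Or.inr (Or.inr ⟨hxC, hzA, hzC, ?_, ?_⟩))
          · exact fun h => hzC (hC hxC h)
          · exact fun h => hi2.2 (htrans h hle1)
    · -- x ∈ B, y ∈ A, incomp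
      rcases hyz with ⟨hb2, hle2⟩ | ⟨hyA', _, _, _⟩ | ⟨hyC', _⟩ | ⟨hyC', _, _, _⟩
      · rcases hb2 with ⟨_, hzA⟩ | ⟨hyA', _, _, _⟩ | ⟨hyC', _⟩
        · refine Or.inr (Or.inl ⟨hxA, hxC, hzA, ?_, ?_⟩)
          · exact fun h => hxA (hA hzA h)
          · exact fun h => hi1.2 (htrans hle2 h)
        · exact absurd hyA hyA'
        · exact absurd (hdj hyA hyC') id
      · exact absurd hyA hyA'
      · exact absurd (hdj hyA hyC') id
      · exact absurd (hdj hyA hyC') id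
    · -- x ∈ C, y ∈ A
      rcases hyz with ⟨hb2, hle2⟩ | ⟨hyA', _, _, _⟩ | ⟨hyC', _⟩ | ⟨hyC', _, _, _⟩
      · rcases hb2 with ⟨_, hzA⟩ | ⟨hyA', _, _, _⟩ | ⟨hyC', _⟩
        · exact Or.inr (Or.inr (Or.inl ⟨hxC, hzA⟩))
        · exact absurd hyA hyA'
        · exact absurd (hdj hyA hyC') id
      · exact absurd hyA hyA'
      · exact absurd (hdj hyA hyC') id
      · exact absurd (hdj hyA hyC') id
    · -- x ∈ C, y ∈ B, incomp
      rcases hyz with ⟨hb2, hle2⟩ | ⟨_, _, hzA, hi2⟩ | ⟨hyC', _⟩ | ⟨hyC', _, _, _⟩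
      · rcases hb2 with ⟨hyA', _⟩ | ⟨_, _, hzA, hzC⟩ | ⟨hyC', _⟩
        · exact absurd hyA' hyA
        · refine Or.inr (Or.inr (Or.inr ⟨hxC, hzA, hzC, ?_, ?_⟩))
          · exact fun h => hzC (hC hxC h)
          · exact fun h => hi1.2 (htrans hle2 h)
        · exact absurd hyC' hyC
      · exact Or.inr (Or.inr (Or.inl ⟨hxC, hzA⟩))
      · exact absurd hyC' hyC
      · exact absurd hyC' hyC
  · intro x y hxy hyx
    rcases hxy with ⟨hb1, hle1⟩ | ⟨hxA, hxC, hyA, hi1⟩ | ⟨hxC, hyA⟩ | ⟨hxC, hyA, hyC, hi1⟩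
    · rcases hyx with ⟨hb2, hle2⟩ | ⟨hyA', hyC', hxA, hi2⟩ | ⟨hyC', hxA⟩ | ⟨hyC2, hxA', hxC', hi2⟩
      · exact hanti hle1 hle2
      · exact absurd hle1 hi2.2
      · rcases hb1 with ⟨_, hyA2⟩ | ⟨hxA2, _, _, _⟩ | ⟨hxC2, _⟩
        · exact absurd (hdj hyA2 hyC') id
        · exact absurd hxA hxA2
        · exact absurd (hdj hxA hxC2) id
      · exact absurd hle1 hi2.2
    · rcases hyx with ⟨hb2, hle2⟩ | ⟨hyA', _, _, _⟩ | ⟨hyC', _⟩ | ⟨hyC', _, _, _⟩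
      · rcases hb2 with ⟨_, hxA'⟩ | ⟨hyA', _, _, _⟩ | ⟨hyC', _⟩
        · exact absurd hxA' hxA
        · exact absurd hyA hyA'
        · exact absurd (hdj hyA hyC') id
      · exact absurd hyA hyA'
      · exact absurd (hdj hyA hyC') id
      · exact absurd (hdj hyA hyC') id
    · rcases hyx with ⟨hb2, hle2⟩ | ⟨hyA', _, _, _⟩ | ⟨hyC', _⟩ | ⟨hyC', _, _, _⟩
      · rcases hb2 with ⟨_, hxA'⟩ | ⟨hyA', _, _, _⟩ | ⟨hyC', _⟩
        · exact absurd (hdj hxA' hxC) id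
        · exact absurd hyA hyA'
        · exact absurd (hdj hyA hyC') id
      · exact absurd hyA hyA'
      · exact absurd (hdj hyA hyC') id
      · exact absurd (hdj hyA hyC') id
    · rcases hyx with ⟨hb2, hle2⟩ | ⟨_, _, hxA, _⟩ | ⟨hyC', _⟩ | ⟨hyC', _, _, _⟩
      · rcases hb2 with ⟨hyA', _⟩ | ⟨_, _, hxA, hxC'⟩ | ⟨hyC', _⟩
        · exact absurd hyA' hyA
        · exact absurd hxC hxC'
        · exact absurd hyC' hyC
      · exact absurd (hdj hxA hxC) id
      · exact absurd hyC' hyC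
      · exact absurd hyC' hyC
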